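/- arXiv:1406.7736 — 3 statements merged into one kernel-verified Lean document; each statement's English description precedes it below -/
import Mathlib

section
/- Let D be a divisor on P^1 over the complex numbers of positive degree, let t be a fixed coordinate on P^1, and let f be a nonzero global section of O(D), i.e. a nonzero rational function with div(f) + D effective. Then there exists another global section g of O(D) and complex numbers a1, b1, a2, b2 such that (a1*f + b1*g)/(a2*f + b2*g) = t. -/
open Polynomial

/-- The order of vanishing (positive) or of the pole (negative) of a nonzero rational
function on `P^1` over `ℂ` at a point of `P^1`, where `some a` denotes the finite point
with coordinate `a` and `none` denotes the point at infinity. -/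
noncomputable def ordAt (r : RatFunc ℂ) : Option ℂ → ℤ
  | some a => (r.num.rootMultiplicity a : ℤ) - (r.denom.rootMultiplicity a : ℤ)
  | none => (r.denom.natDegree : ℤ) - (r.num.natDegree : ℤ)

/-- A coordinate function on `P^1`: a nonzero rational function with exactly one zero and
exactly one pole, both of order one. -/
def IsCoordinate (t : RatFunc ℂ) : Prop :=
  t ≠ 0 ∧ ∃ z p : Option ℂ, z ≠ p ∧ ordAt t z = 1 ∧ ordAt t p = -1 ∧
    ∀ x : Option ℂ, x ≠ z → x ≠ p → ordAt t x = 0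

namespace Stmt1Aux

lemma ordAt_some_def (r : RatFunc ℂ) (a : ℂ) :
    ordAt r (some a) = (r.num.rootMultiplicity a : ℤ) - (r.denom.rootMultiplicity a : ℤ) := rfl

lemma ordAt_none_def (r : RatFunc ℂ) :
    ordAt r none = (r.denom.natDegree : ℤ) - (r.num.natDegree : ℤ) := rfl

lemma cross {r : RatFunc ℂ} {p q : ℂ[X]} (hq : q ≠ 0)
    (h : r = algebraMap ℂ[X] (RatFunc ℂ) p / algebraMap ℂ[X] (RatFunc ℂ) q) :
    r.num * q = p * r.denom := by
  apply RatFunc.algebraMap_injective ℂ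
  have h1 : (algebraMap ℂ[X] (RatFunc ℂ)) r.num / (algebraMap ℂ[X] (RatFunc ℂ)) r.denom
      = algebraMap ℂ[X] (RatFunc ℂ) p / algebraMap ℂ[X] (RatFunc ℂ) q := by
    rw [RatFunc.num_div_denom, h]
  have hd : (algebraMap ℂ[X] (RatFunc ℂ)) r.denom ≠ 0 := by
    simpa using r.denom_ne_zero
  have hq' : (algebraMap ℂ[X] (RatFunc ℂ)) q ≠ 0 := by simpa using hq
  rw [div_eq_div_iff hd hq'] at h1
  simpa [map_mul] using h1

lemma ordAt_eq_some {r : RatFunc ℂ} {p q : ℂ[X]} (hp : p ≠ 0) (hq : q ≠ 0)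
    (h : r = algebraMap ℂ[X] (RatFunc ℂ) p / algebraMap ℂ[X] (RatFunc ℂ) q) (a : ℂ) :
    ordAt r (some a) = (p.rootMultiplicity a : ℤ) - (q.rootMultiplicity a : ℤ) := by
  have hr : r ≠ 0 := by
    rw [h]; exact div_ne_zero (by simpa using hp) (by simpa using hq)
  have hc := cross hq h
  have hn := RatFunc.num_ne_zero hr
  have h1 := rootMultiplicity_mul (x := a) (mul_ne_zero hn hq)
  have h2 := rootMultiplicity_mul (x := a) (mul_ne_zero hp r.denom_ne_zero)
  rw [hc, h2] at h1
  simp only [ordAt]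
  omega

lemma ordAt_eq_none {r : RatFunc ℂ} {p q : ℂ[X]} (hp : p ≠ 0) (hq : q ≠ 0)
    (h : r = algebraMap ℂ[X] (RatFunc ℂ) p / algebraMap ℂ[X] (RatFunc ℂ) q) :
    ordAt r none = (q.natDegree : ℤ) - (p.natDegree : ℤ) := by
  have hr : r ≠ 0 := by
    rw [h]; exact div_ne_zero (by simpa using hp) (by simpa using hq)
  have hc := cross hq h
  have hn := RatFunc.num_ne_zero hr
  have h1 := natDegree_mul hn hq
  have h2 := natDegree_mul hp r.denom_ne_zero
  rw [hc, h2] at h1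
  simp only [ordAt]
  omega

lemma ordAt_mul {r s : RatFunc ℂ} (hr : r ≠ 0) (hs : s ≠ 0) (x : Option ℂ) :
    ordAt (r * s) x = ordAt r x + ordAt s x := by
  have h : r * s = algebraMap ℂ[X] (RatFunc ℂ) (r.num * s.num)
      / algebraMap ℂ[X] (RatFunc ℂ) (r.denom * s.denom) := by
    rw [map_mul, map_mul,
      ← div_mul_div_comm, RatFunc.num_div_denom, RatFunc.num_div_denom]
  have hpn := mul_ne_zero (RatFunc.num_ne_zero hr) (RatFunc.num_ne_zero hs)
  have hpd := mul_ne_zero r.denom_ne_zero s.denom_ne_zero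
  match x with
  | some a =>
      rw [ordAt_eq_some hpn hpd h a, rootMultiplicity_mul (x := a) hpn,
        rootMultiplicity_mul (x := a) hpd]
      simp only [ordAt]; push_cast; ring
  | none =>
      rw [ordAt_eq_none hpn hpd h, natDegree_mul (RatFunc.num_ne_zero hr) (RatFunc.num_ne_zero hs),
        natDegree_mul r.denom_ne_zero s.denom_ne_zero]
      simp only [ordAt]; push_cast; ring

lemma ordAt_one (x : Option ℂ) : ordAt 1 x = 0 := by
  have h : (1 : RatFunc ℂ) = algebraMap ℂ[X] (RatFunc ℂ) 1 / algebraMap ℂ[X] (RatFunc ℂ) 1 := by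
    simp
  match x with
  | some a =>
      rw [ordAt_eq_some one_ne_zero one_ne_zero h a]; simp
  | none =>
      rw [ordAt_eq_none one_ne_zero one_ne_zero h]; simp

lemma ordAt_inv {r : RatFunc ℂ} (hr : r ≠ 0) (x : Option ℂ) :
    ordAt r⁻¹ x = - ordAt r x := by
  have h := ordAt_mul hr (inv_ne_zero hr) x
  rw [mul_inv_cancel₀ hr, ordAt_one] at h
  omega

lemma sum_rm {p : ℂ[X]} (hp : p ≠ 0) {A : Finset ℂ} (hA : p.roots.toFinset ⊆ A) :
    ∑ a ∈ A, p.rootMultiplicity a = p.natDegree := by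
  classical
  have h1 : p.natDegree = Multiset.card p.roots := by
    simpa using Polynomial.Splits.natDegree_eq_card_roots (IsAlgClosed.splits p)
  rw [h1, ← Multiset.toFinset_sum_count_eq]
  rw [Finset.sum_subset hA]
  · exact Finset.sum_congr rfl fun a _ => (count_roots p).symm
  · intro x _ hx
    rw [count_roots]
    exact rootMultiplicity_eq_zero fun hroot => hx (Multiset.mem_toFinset.2 (mem_roots'.2 ⟨hp, hroot⟩))

lemma ordAt_sum_zero {r : RatFunc ℂ} (hr : r ≠ 0) {A : Finset ℂ}
    (hA : r.num.roots.toFinset ∪ r.denom.roots.toFinset ⊆ A) :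
    ordAt r none + ∑ a ∈ A, ordAt r (some a) = 0 := by
  have hn := RatFunc.num_ne_zero hr
  have h1 := sum_rm hn (le_trans Finset.subset_union_left hA)
  have h2 := sum_rm r.denom_ne_zero (le_trans Finset.subset_union_right hA)
  have h3 : ∑ a ∈ A, ordAt r (some a)
      = (∑ a ∈ A, (r.num.rootMultiplicity a : ℤ)) - ∑ a ∈ A, (r.denom.rootMultiplicity a : ℤ) := by
    rw [← Finset.sum_sub_distrib]
    rfl
  have e1 : (∑ a ∈ A, (r.num.rootMultiplicity a : ℤ)) = (r.num.natDegree : ℤ) := by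
    exact_mod_cast congrArg (Nat.cast : ℕ → ℤ) h1
  have e2 : (∑ a ∈ A, (r.denom.rootMultiplicity a : ℤ)) = (r.denom.natDegree : ℤ) := by
    exact_mod_cast congrArg (Nat.cast : ℕ → ℤ) h2
  rw [h3, e1, e2]
  simp only [ordAt]
  ring

lemma exists_slack (D : Option ℂ →₀ ℤ) (hdeg : 0 < D.sum fun _ n => n)
    (f : RatFunc ℂ) (hf : f ≠ 0) (hsec : ∀ x : Option ℂ, 0 ≤ ordAt f x + D x) :
    ∃ x0 : Option ℂ, 1 ≤ ordAt f x0 + D x0 := by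
  by_contra hcon
  push_neg at hcon
  have heq : ∀ x, ordAt f x = -D x := fun x => by have := hsec x; have := hcon x; omega
  classical
  set A : Finset ℂ := f.num.roots.toFinset ∪ f.denom.roots.toFinset ∪
    (D.support.erase none).image (fun x => x.getD 0) with hA
  set S : Finset (Option ℂ) := insert none (A.image some) with hS
  have hsupp : D.support ⊆ S := by
    intro x hx
    rcases x with _ | a
    · exact Finset.mem_insert_self _ _
    · apply Finset.mem_insert_of_mem
      apply Finset.mem_image_of_mem
      apply Finset.mem_union_right
      refine Finset.mem_image.2 ⟨some a, ?_, rfl⟩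
      exact Finset.mem_erase.2 ⟨by simp, hx⟩
  have hsum : D.sum (fun _ n => n) = ∑ x ∈ S, D x := by
    rw [Finsupp.sum]
    exact Finset.sum_subset hsupp fun x _ hx => Finsupp.notMem_support_iff.1 hx
  have hzero := ordAt_sum_zero hf (A := A) (le_trans (le_refl _) ?_)
  · have hsplit : ∑ x ∈ S, D x = D none + ∑ a ∈ A, D (some a) := by
      rw [hS, Finset.sum_insert (by simp), Finset.sum_image (by simp)]
    have h3 : ∑ a ∈ A, D (some a) = -∑ a ∈ A, ordAt f (some a) := by
      rw [← Finset.sum_neg_distrib]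
      exact Finset.sum_congr rfl fun a _ => by rw [heq]; ring
    have h4 := heq none
    omega
  · exact le_trans Finset.subset_union_left (le_refl _)

lemma nocommon (t : RatFunc ℂ) (a : ℂ) (hda : t.denom.rootMultiplicity a ≠ 0) :
    t.num.rootMultiplicity a = 0 := by
  obtain ⟨u, v, huv⟩ := RatFunc.isCoprime_num_denom t
  by_contra hna
  have hd : t.denom.IsRoot a := by
    rw [← rootMultiplicity_pos t.denom_ne_zero]; omega
  have hn : t.num.IsRoot a := by
    have hn0 : t.num ≠ 0 := by
      intro h; rw [h] at hna; simp [rootMultiplicity_zero] at hna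
    rw [← rootMultiplicity_pos hn0]; omega
  have := congrArg (eval a) huv
  simp [IsRoot.eq_zero hd, IsRoot.eq_zero hn] at this

-- a coordinate is not a constant
lemma coord_ne_C {t : RatFunc ℂ} {z : Option ℂ} (ht0 : t ≠ 0) (hz : ordAt t z = 1) (c : ℂ) :
    t ≠ RatFunc.C c := by
  intro htc
  have hc : c ≠ 0 := by
    intro h; rw [h, map_zero] at htc; exact ht0 htc
  have hrep : t = algebraMap ℂ[X] (RatFunc ℂ) (Polynomial.C c)
      / algebraMap ℂ[X] (RatFunc ℂ) 1 := by
    rw [map_one, div_one, RatFunc.algebraMap_C, htc]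
  have hC0 : Polynomial.C c ≠ 0 := by simpa using hc
  match z with
  | some a =>
      rw [ordAt_eq_some hC0 one_ne_zero hrep a] at hz
      rw [rootMultiplicity_eq_zero (by simp [IsRoot, hc]),
        rootMultiplicity_eq_zero (by simp [IsRoot])] at hz
      simp at hz
  | none =>
      rw [ordAt_eq_none hC0 one_ne_zero hrep] at hz
      simp at hz

-- representation of t - C c
lemma sub_C_rep (t : RatFunc ℂ) (c : ℂ) :
    t - RatFunc.C c = algebraMap ℂ[X] (RatFunc ℂ) (t.num - Polynomial.C c * t.denom)
      / algebraMap ℂ[X] (RatFunc ℂ) t.denom := by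
  have hd : (algebraMap ℂ[X] (RatFunc ℂ)) t.denom ≠ 0 := by simpa using t.denom_ne_zero
  rw [map_sub, map_mul, sub_div, mul_div_assoc, div_self hd, mul_one,
    RatFunc.num_div_denom, RatFunc.algebraMap_C]

/-- The key construction for the case where the slack point is neither the zero nor the
pole of the coordinate: a constant `c` such that `t - C c` vanishes (to order `≤ 1`) only
at `x0`. -/
lemma exists_c {t : RatFunc ℂ} {z p x0 : Option ℂ} (ht0 : t ≠ 0)
    (hz : ordAt t z = 1) (hp : ordAt t p = -1)
    (hother : ∀ x : Option ℂ, x ≠ z → x ≠ p → ordAt t x = 0)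
    (hx0z : x0 ≠ z) (hx0p : x0 ≠ p) :
    ∃ c : ℂ, t - RatFunc.C c ≠ 0 ∧ ordAt (t - RatFunc.C c) x0 ≤ 1 ∧
      ∀ x : Option ℂ, x ≠ x0 → ordAt (t - RatFunc.C c) x ≤ 0 := by
  classical
  have hn : t.num ≠ 0 := RatFunc.num_ne_zero ht0
  have hd : t.denom ≠ 0 := t.denom_ne_zero
  -- denominador has roots only at p
  have hdrm : ∀ a : ℂ, (some a : Option ℂ) ≠ p → t.denom.rootMultiplicity a = 0 := by
    intro a hap
    by_contra hda
    have hna := nocommon t a hda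
    have hords := ordAt_some_def t a
    rcases eq_or_ne (some a : Option ℂ) z with hv | hv
    · rw [hv, hz] at hords; omega
    · have := hother (some a) hv hap
      rw [this] at hords; omega
  -- degree facts for the denominator
  have hdeg_none : p = none → t.denom.natDegree = 0 := by
    intro hpn
    have : t.denom.roots.toFinset ⊆ (∅ : Finset ℂ) := by
      intro a ha
      exfalso
      have := (mem_roots'.1 (Multiset.mem_toFinset.1 ha)).2
      have h2 : t.denom.rootMultiplicity a ≠ 0 := by
        have := (rootMultiplicity_pos hd).2 this; omega
      exact h2 (hdrm a (by rw [hpn]; simp))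
    have := sum_rm hd this
    simpa using this.symm
  have hdeg_some : ∀ b : ℂ, p = some b → t.denom.natDegree = 1 ∧ t.denom.rootMultiplicity b = 1 := by
    intro b hpb
    have hrmb : t.denom.rootMultiplicity b = 1 := by
      have hords := ordAt_some_def t b
      rw [← hpb, hp] at hords
      rcases Nat.eq_zero_or_pos (t.denom.rootMultiplicity b) with h | h
      · omega
      · have := nocommon t b (by omega)
        omega
    refine ⟨?_, hrmb⟩
    have hsub : t.denom.roots.toFinset ⊆ ({b} : Finset ℂ) := by
      intro a ha
      have := (mem_roots'.1 (Multiset.mem_toFinset.1 ha)).2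
      have h2 : t.denom.rootMultiplicity a ≠ 0 := by
        have := (rootMultiplicity_pos hd).2 this; omega
      have : (some a : Option ℂ) = p := by
        by_contra hc
        exact h2 (hdrm a hc)
      rw [hpb] at this
      simp at this
      simp [this]
    have := sum_rm hd hsub
    simp [hrmb] at this
    omega
  have hdegd1 : t.denom.natDegree ≤ 1 := by
    match p, hp with
    | none, hp => rw [hdeg_none rfl]; omega
    | some b, hp => rw [(hdeg_some b rfl).1]
  -- degree of the numerator
  have hordn : ordAt t none = (t.denom.natDegree : ℤ) - t.num.natDegree := rfl
  have hdegn1 : t.num.natDegree ≤ 1 := by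
    rcases eq_or_ne (none : Option ℂ) p with hv | hv
    · have h0 := hdeg_none hv.symm
      rw [← hv] at hp
      rw [hp] at hordn
      omega
    · rcases eq_or_ne (none : Option ℂ) z with hw | hw
      · rw [← hw] at hz
        rw [hz] at hordn
        omega
      · rw [hother none hw hv] at hordn; omega
  -- now split on x0
  match x0, hx0z, hx0p with
  | some a, hx0z, hx0p =>
      have hda0 : t.denom.rootMultiplicity a = 0 := hdrm a hx0p
      have hda : t.denom.eval a ≠ 0 := by
        intro h
        have := (rootMultiplicity_pos hd).2 h
        omega
      set c := t.num.eval a / t.denom.eval a with hc_def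
      set m := t.num - Polynomial.C c * t.denom with hm_def
      have hma : m.eval a = 0 := by
        simp [hm_def, hc_def, div_mul_cancel₀ _ hda]
      have hm0 : m ≠ 0 := by
        intro h
        have hnd : t.num = Polynomial.C c * t.denom := by
          have := sub_eq_zero.1 (hm_def ▸ h); linear_combination this
        have : t = RatFunc.C c := by
          have h2 : t = algebraMap ℂ[X] (RatFunc ℂ) t.num / algebraMap ℂ[X] (RatFunc ℂ) t.denom :=
            (RatFunc.num_div_denom t).symm
          rw [hnd, map_mul, mul_div_assoc, div_self (by simpa using hd), mul_one,
            RatFunc.algebraMap_C] at h2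
          exact h2
        exact coord_ne_C ht0 hz c this
      have hdegm : m.natDegree ≤ 1 := by
        calc m.natDegree ≤ max t.num.natDegree (Polynomial.C c * t.denom).natDegree :=
            natDegree_sub_le _ _
        _ ≤ 1 := by
          apply max_le hdegn1
          exact le_trans (natDegree_C_mul_le c t.denom) hdegd1
      have hdegm_pos : 1 ≤ m.natDegree := by
        by_contra h
        have h0 : m.natDegree = 0 := by omega
        obtain ⟨k, hk⟩ := natDegree_eq_zero.1 h0
        rw [← hk] at hma
        simp at hma
        rw [hma] at hk
        simp at hk
        exact hm0 hk.symm
      -- a is a root of m, and m has no other roots, all with multiplicity ≤ 1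
      have hcard : Multiset.card m.roots ≤ 1 := le_trans (card_roots' m) hdegm
      have haroot : a ∈ m.roots := mem_roots'.2 ⟨hm0, hma⟩
      have hrm_le : ∀ b : ℂ, m.rootMultiplicity b ≤ 1 := by
        intro b
        rw [← count_roots]
        exact le_trans (Multiset.count_le_card _ _) hcard
      have hrm_other : ∀ b : ℂ, b ≠ a → m.rootMultiplicity b = 0 := by
        intro b hba
        by_contra hb
        have hbroot : b ∈ m.roots := by
          rw [mem_roots']
          refine ⟨hm0, ?_⟩
          rw [← rootMultiplicity_pos hm0]
          omega
        have : ({a, b} : Finset ℂ) ⊆ m.roots.toFinset := by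
          intro x hx
          simp at hx
          rcases hx with h | h
          · rw [h]; exact Multiset.mem_toFinset.2 haroot
          · rw [h]; exact Multiset.mem_toFinset.2 hbroot
        have h2 : 2 ≤ ∑ x ∈ m.roots.toFinset, m.roots.count x := by
          calc (2 : ℕ) = ∑ x ∈ ({a, b} : Finset ℂ), 1 := by
                rw [Finset.sum_const]
                rw [Finset.card_insert_of_notMem (by simpa using hba.symm)]
                simp
          _ ≤ ∑ x ∈ ({a, b} : Finset ℂ), m.roots.count x := by
                apply Finset.sum_le_sum
                intro x hx
                simp at hx
                rcases hx with h | h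
                · rw [h, count_roots]
                  have := (rootMultiplicity_pos hm0).2 hma
                  omega
                · rw [h, count_roots]
                  have : m.IsRoot b := (mem_roots'.1 hbroot).2
                  have := (rootMultiplicity_pos hm0).2 this
                  omega
          _ ≤ ∑ x ∈ m.roots.toFinset, m.roots.count x := by
                apply Finset.sum_le_sum_of_subset this
        rw [Multiset.toFinset_sum_count_eq] at h2
        omega
      refine ⟨c, ?_, ?_, ?_⟩
      · intro h
        apply hm0
        have h2 := sub_C_rep t c
        rw [h] at h2
        rw [← hm_def] at h2
        have h3 : algebraMap ℂ[X] (RatFunc ℂ) m = 0 := by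
          have hd' : (algebraMap ℂ[X] (RatFunc ℂ)) t.denom ≠ 0 := by simpa using hd
          field_simp at h2
          simpa using h2.symm
        exact (map_eq_zero_iff _ (RatFunc.algebraMap_injective ℂ)).1 h3
      · rw [ordAt_eq_some hm0 hd ((sub_C_rep t c).trans (by rw [← hm_def])) a]
        have := hrm_le a
        omega
      · intro x hx
        match x with
        | some b =>
            rw [ordAt_eq_some hm0 hd
              ((sub_C_rep t c).trans (by rw [← hm_def])) b]
            have : b ≠ a := by
              intro h; exact hx (by rw [h])
            rw [hrm_other b this]
            omega
        | none =>
            rw [ordAt_eq_none hm0 hd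
              ((sub_C_rep t c).trans (by rw [← hm_def]))]
            omega
  | none, hx0z, hx0p =>
      -- p is finite, deg d = 1, ord at infinity is 0, so deg n = 1
      obtain ⟨b, hpb⟩ : ∃ b : ℂ, p = some b := by
        match p, hx0p with
        | some b, _ => exact ⟨b, rfl⟩
        | none, hx0p => exact absurd rfl hx0p
      have hdd := (hdeg_some b hpb).1
      have hord0 : ordAt t none = 0 := hother none hx0z hx0p
      have hdn : t.num.natDegree = 1 := by
        rw [hordn] at hord0
        omega
      have hld : t.denom.coeff 1 ≠ 0 := by
        have := leadingCoeff_ne_zero.2 hd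
        rwa [leadingCoeff, hdd] at this
      set c := t.num.coeff 1 / t.denom.coeff 1 with hc_def
      set m := t.num - Polynomial.C c * t.denom with hm_def
      have hcoeff1 : m.coeff 1 = 0 := by
        simp [hm_def, hc_def, coeff_C_mul, div_mul_cancel₀ _ hld]
      have hdegm : m.natDegree = 0 := by
        rw [← Nat.le_zero]
        rw [natDegree_le_iff_coeff_eq_zero]
        intro N hN
        rcases eq_or_lt_of_le (Nat.one_le_iff_ne_zero.2 (by omega) : 1 ≤ N) with h | h
        · rw [← h]; exact hcoeff1
        · simp only [hm_def, coeff_sub, coeff_C_mul]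
          rw [coeff_eq_zero_of_natDegree_lt (by omega), coeff_eq_zero_of_natDegree_lt (by omega)]
          ring
      have hm0 : m ≠ 0 := by
        intro h
        have hnd : t.num = Polynomial.C c * t.denom := by
          have := sub_eq_zero.1 (hm_def ▸ h); linear_combination this
        have : t = RatFunc.C c := by
          have h2 : t = algebraMap ℂ[X] (RatFunc ℂ) t.num / algebraMap ℂ[X] (RatFunc ℂ) t.denom :=
            (RatFunc.num_div_denom t).symm
          rw [hnd, map_mul, mul_div_assoc, div_self (by simpa using hd), mul_one,
            RatFunc.algebraMap_C] at h2
          exact h2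
        exact coord_ne_C ht0 hz c this
      have hrm : ∀ b' : ℂ, m.rootMultiplicity b' = 0 := by
        intro b'
        apply rootMultiplicity_eq_zero
        intro hroot
        obtain ⟨k, hk⟩ := natDegree_eq_zero.1 hdegm
        rw [← hk] at hroot
        simp [IsRoot] at hroot
        rw [hroot] at hk
        simp at hk
        exact hm0 hk.symm
      refine ⟨c, ?_, ?_, ?_⟩
      · intro h
        apply hm0
        have h2 := sub_C_rep t c
        rw [h] at h2
        rw [← hm_def] at h2
        have h3 : algebraMap ℂ[X] (RatFunc ℂ) m = 0 := by
          have hd' : (algebraMap ℂ[X] (RatFunc ℂ)) t.denom ≠ 0 := by simpa using hd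
          field_simp at h2
          simpa using h2.symm
        exact (map_eq_zero_iff _ (RatFunc.algebraMap_injective ℂ)).1 h3
      · rw [ordAt_eq_none hm0 hd ((sub_C_rep t c).trans (by rw [← hm_def]))]
        omega
      · intro x hx
        match x, hx with
        | some b', _ =>
            rw [ordAt_eq_some hm0 hd
              ((sub_C_rep t c).trans (by rw [← hm_def])) b']
            rw [hrm b']
            omega



lemma section_mul (D : Option ℂ →₀ ℤ) {f : RatFunc ℂ} (hf : f ≠ 0)
    (hsec : ∀ x : Option ℂ, 0 ≤ ordAt f x + D x) {x0 : Option ℂ}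
    (hx0 : 1 ≤ ordAt f x0 + D x0) {h : RatFunc ℂ} (hh : h ≠ 0)
    (hb : ∀ x : Option ℂ, (if x = x0 then (-1 : ℤ) else 0) ≤ ordAt h x) :
    ∀ x : Option ℂ, 0 ≤ ordAt (f * h) x + D x := by
  intro x
  rw [ordAt_mul hf hh x]
  have := hb x
  by_cases hx : x = x0
  · rw [hx] at this ⊢
    simp at this
    omega
  · simp [hx] at this
    have := hsec x
    omega

end Stmt1Aux

open Stmt1Aux in
/-- Corollary `ratfuncexists`: for a divisor `D` on `P^1` of positive
degree (a finitely supported `ℤ`-valued function on the points of `P^1`) and a nonzero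
global section `f` of `O(D)` (i.e. `div(f) + D ≥ 0`), there exist a global section `g` of
`O(D)` and constants `a1, b1, a2, b2 ∈ ℂ` such that `(a1*f + b1*g)/(a2*f + b2*g) = t`,
where `t` is a fixed coordinate on `P^1`. -/
theorem stmt1 (D : Option ℂ →₀ ℤ) (hdeg : 0 < D.sum fun _ n => n)
    (t : RatFunc ℂ) (ht : IsCoordinate t)
    (f : RatFunc ℂ) (hf : f ≠ 0) (hsec : ∀ x : Option ℂ, 0 ≤ ordAt f x + D x) :
    ∃ g : RatFunc ℂ, g ≠ 0 ∧ (∀ x : Option ℂ, 0 ≤ ordAt g x + D x) ∧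
      ∃ a1 b1 a2 b2 : ℂ,
        (RatFunc.C a1 * f + RatFunc.C b1 * g) / (RatFunc.C a2 * f + RatFunc.C b2 * g) = t := by
  obtain ⟨ht0, z, p, hzp, hz, hp, hother⟩ := ht
  obtain ⟨x0, hx0⟩ := exists_slack D hdeg f hf hsec
  by_cases hx0p : x0 = p
  · -- slack at the pole of t: take g = f * t
    refine ⟨f * t, mul_ne_zero hf ht0, ?_, 0, 1, 1, 0, ?_⟩
    · apply section_mul D hf hsec hx0 ht0
      intro x
      by_cases hxz : x = z
      · rw [hxz, hz]; split <;> omega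
      · by_cases hxp : x = p
        · rw [hxp, hp, hx0p]; simp
        · rw [hother x hxz hxp]
          have : x ≠ x0 := by rw [hx0p]; exact hxp
          simp [this]
    · rw [map_zero, map_one, zero_mul, one_mul, zero_mul, one_mul, add_zero, zero_add]
      exact mul_div_cancel_left₀ t hf
  · by_cases hx0z : x0 = z
    · -- slack at the zero of t: take g = f * t⁻¹
      refine ⟨f * t⁻¹, mul_ne_zero hf (inv_ne_zero ht0), ?_, 1, 0, 0, 1, ?_⟩
      · apply section_mul D hf hsec hx0 (inv_ne_zero ht0)
        intro x
        rw [ordAt_inv ht0]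
        by_cases hxz : x = z
        · rw [hxz, hz, hx0z]; simp
        · by_cases hxp : x = p
          · rw [hxp, hp]; split <;> omega
          · rw [hother x hxz hxp]
            have : x ≠ x0 := by rw [hx0z]; exact hxz
            simp [this]
      · rw [map_zero, map_one, zero_mul, one_mul, zero_mul, one_mul, add_zero, zero_add]
        rw [div_eq_iff (mul_ne_zero hf (inv_ne_zero ht0))]
        field_simp
      -- slack elsewhere: take g = f * (t - C c)⁻¹ for suitable c
    · obtain ⟨c, hs0, hle1, hle0⟩ := exists_c ht0 hz hp hother hx0z hx0p
      refine ⟨f * (t - RatFunc.C c)⁻¹, mul_ne_zero hf (inv_ne_zero hs0), ?_, 1, c, 0, 1, ?_⟩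
      · apply section_mul D hf hsec hx0 (inv_ne_zero hs0)
        intro x
        rw [ordAt_inv hs0]
        by_cases hx : x = x0
        · rw [hx]; simp; have := hle1; omega
        · have := hle0 x hx
          simp [hx]
          omega
      · rw [map_zero, map_one, zero_mul, one_mul, zero_add, one_mul]
        rw [div_eq_iff (mul_ne_zero hf (inv_ne_zero hs0))]
        field_simp
        ring
end

section
/- Let A be a module over a ring R, let q >= 1, and let A_1, ..., A_q be submodules of A with the property that A_{jk} := A for pairs (as in a Cech setup where all double intersections give the full module). Consider the Cech-type complex B with B^i the direct sum over increasing sequences of length i+1 of the corresponding intersections (so B^0 = oplus_j A_j, B^1 = oplus_{j<k} A). Then H^1(B) is isomorphic to the quotient of oplus_{j=1}^q (A/A_j) by the diagonal image of A. -/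
/-- Index set of pairs `j < k` in `Fin q`. -/
def PairIdx (q : ℕ) : Type := {p : Fin q × Fin q // p.1 < p.2}

/-- Index set of triples `j < k < l` in `Fin q`. -/
def TripleIdx (q : ℕ) : Type := {t : (Fin q × Fin q) × Fin q // t.1.1 < t.1.2 ∧ t.1.2 < t.2}

variable (R : Type*) [CommRing R] (A : Type*) [AddCommGroup A] [Module R A]

/-- The Čech differential `B^0 = ⊕_j A_j → B^1 = ⊕_{j<k} A_{j,k} = ⊕_{j<k} A`
(using that all pairwise modules `A_{j,k}` equal `A`). -/
noncomputable def cechD0 (q : ℕ) (Asub : Fin q → Submodule R A) :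
    ((j : Fin q) → Asub j) →ₗ[R] (PairIdx q → A) where
  toFun x p := (x p.1.2 : A) - (x p.1.1 : A)
  map_add' x y := by
    funext p
    simp only [Pi.add_apply, Submodule.coe_add]
    abel
  map_smul' c x := by
    funext p
    simp only [Pi.smul_apply, SetLike.val_smul, RingHom.id_apply, smul_sub]

/-- The Čech differential `B^1 = ⊕_{j<k} A → B^2 = ⊕_{j<k<l} A`. -/
noncomputable def cechD1 (q : ℕ) : (PairIdx q → A) →ₗ[R] (TripleIdx q → A) where
  toFun y t :=
    y ⟨(t.1.1.2, t.1.2), t.2.2⟩ - y ⟨(t.1.1.1, t.1.2), t.2.1.trans t.2.2⟩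
      + y ⟨(t.1.1.1, t.1.1.2), t.2.1⟩
  map_add' x y := by
    funext t
    simp only [Pi.add_apply]
    change (x _ + y _) - (x _ + y _) + (x _ + y _) = _
    abel
  map_smul' c x := by
    funext t
    simp only [Pi.smul_apply, RingHom.id_apply, smul_sub, smul_add]
    rfl

/-- The first cohomology `H^1(B^•) = ker d^1 / im d^0` of the Čech-type complex. -/
noncomputable def cechH1 (q : ℕ) (Asub : Fin q → Submodule R A) : Type _ :=
  LinearMap.ker (cechD1 R A q) ⧸
    (Submodule.comap (LinearMap.ker (cechD1 R A q)).subtype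
      (LinearMap.range (cechD0 R A q Asub)))

noncomputable instance (q : ℕ) (Asub : Fin q → Submodule R A) :
    AddCommGroup (cechH1 R A q Asub) := by
  delta cechH1; infer_instance

noncomputable instance (q : ℕ) (Asub : Fin q → Submodule R A) :
    Module R (cechH1 R A q Asub) := by
  delta cechH1; infer_instance

/-- The quotient `(⊕_j A/A_j) / A`, where `A` is embedded diagonally. -/
noncomputable def diagQuot (q : ℕ) (Asub : Fin q → Submodule R A) : Type _ :=
  ((j : Fin q) → A ⧸ Asub j) ⧸ LinearMap.range (LinearMap.pi fun j => (Asub j).mkQ)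

noncomputable instance (q : ℕ) (Asub : Fin q → Submodule R A) :
    AddCommGroup (diagQuot R A q Asub) := by
  delta diagQuot; infer_instance

noncomputable instance (q : ℕ) (Asub : Fin q → Submodule R A) :
    Module R (diagQuot R A q Asub) := by
  delta diagQuot; infer_instance

/-- Corollary `h1compute`: for a module `A` over a ring `R`, `q ≥ 1`,
and submodules `A_1, ..., A_q` of `A`, in the Čech-type complex `B^•` with
`B^0 = ⊕_j A_j`, `B^1 = ⊕_{j<k} A_{j,k}` and all `A_{j,k} = A`, the first cohomology
`H^1(B^•)` is isomorphic to `(⊕_{j=1}^q A/A_j) / A`, where `A` maps to `⊕_j A/A_j`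
diagonally. -/
theorem stmt5 (q : ℕ) (hq : 1 ≤ q) (Asub : Fin q → Submodule R A) :
    Nonempty (cechH1 R A q Asub ≃ₗ[R] diagQuot R A q Asub) := by
  classical
  haveI : NeZero q := ⟨Nat.one_le_iff_ne_zero.mp hq⟩
  -- the map extracting `c_j = y_{0,j}` from a 1-cochain
  let c : (PairIdx q → A) →ₗ[R] (Fin q → A) :=
    { toFun := fun y j => if h : (0 : Fin q) < j then y ⟨((0 : Fin q), j), h⟩ else 0
      map_add' := by
        intro x y; funext j; by_cases h : (0 : Fin q) < j <;> simp [h] <;> rfl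
      map_smul' := by
        intro r y; funext j; by_cases h : (0 : Fin q) < j <;> simp [h] <;> rfl }
  let D : A →ₗ[R] ((j : Fin q) → A ⧸ Asub j) := LinearMap.pi fun j => (Asub j).mkQ
  let P : ((j : Fin q) → A ⧸ Asub j) →ₗ[R] diagQuot R A q Asub :=
    (LinearMap.range D).mkQ
  let M : (Fin q → A) →ₗ[R] ((j : Fin q) → A ⧸ Asub j) :=
    LinearMap.pi fun j => (Asub j).mkQ.comp (LinearMap.proj j)
  let Ψ : (LinearMap.ker (cechD1 R A q)) →ₗ[R] diagQuot R A q Asub :=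
    (P.comp M).comp (c.comp (LinearMap.ker (cechD1 R A q)).subtype)
  set p : Submodule R (LinearMap.ker (cechD1 R A q)) :=
    Submodule.comap (LinearMap.ker (cechD1 R A q)).subtype
      (LinearMap.range (cechD0 R A q Asub)) with hp
  -- key cocycle identity
  have cocycle : ∀ (y : PairIdx q → A), cechD1 R A q y = 0 →
      ∀ (pr : PairIdx q), y pr = c y pr.1.2 - c y pr.1.1 := by
    intro y hy pr
    obtain ⟨⟨j, k⟩, hjk⟩ := pr
    by_cases hj : (0 : Fin q) < j
    · have h0k : (0 : Fin q) < k := hj.trans hjk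
      have := congrFun hy ⟨(((0 : Fin q), j), k), ⟨hj, hjk⟩⟩
      simp only [cechD1, LinearMap.coe_mk, AddHom.coe_mk, Pi.zero_apply] at this
      simp only [c, LinearMap.coe_mk, AddHom.coe_mk, dif_pos hj, dif_pos h0k]
      rw [sub_add] at this
      exact sub_eq_zero.mp this
    · have hj0 : j = 0 := by
        have hv1 : ¬ (0 : Fin q).val < j.val := fun hc => hj (Fin.lt_def.mpr hc)
        have hv2 : (0 : Fin q).val = 0 := Fin.val_zero q
        exact Fin.ext (by omega)
      subst hj0
      simp only [c, LinearMap.coe_mk, AddHom.coe_mk, dif_pos hjk, dif_neg hj, sub_zero]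
  -- Ψ kills p
  have hker : p ≤ LinearMap.ker Ψ := by
    rintro ⟨y, hy⟩ hyp
    simp only [hp, Submodule.mem_comap, LinearMap.mem_range, Submodule.coe_subtype] at hyp
    obtain ⟨x, hx⟩ := hyp
    simp only [LinearMap.mem_ker, Ψ, LinearMap.comp_apply, Submodule.coe_subtype]
    rw [show P (M (c y)) = 0 ↔ M (c y) ∈ LinearMap.range D from
      Submodule.Quotient.mk_eq_zero _]
    refine ⟨-(x 0 : A), ?_⟩
    funext j
    simp only [D, M, LinearMap.pi_apply, LinearMap.comp_apply, LinearMap.proj_apply]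
    rw [Submodule.mkQ_apply, Submodule.mkQ_apply, Submodule.Quotient.eq]
    by_cases h : (0 : Fin q) < j
    · have : c y j = (x j : A) - (x 0 : A) := by
        have := congrFun hx ⟨((0 : Fin q), j), h⟩
        simp only [cechD0, LinearMap.coe_mk, AddHom.coe_mk] at this
        simp only [c, LinearMap.coe_mk, AddHom.coe_mk, dif_pos h]
        exact this.symm
      rw [this]
      have : (-(x 0 : A)) - ((x j : A) - (x 0 : A)) = -(x j : A) := by abel
      rw [this]
      exact neg_mem (x j).2
    · have hj0 : j = 0 := by
        have hv1 : ¬ (0 : Fin q).val < j.val := fun hc => h (Fin.lt_def.mpr hc)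
        have hv2 : (0 : Fin q).val = 0 := Fin.val_zero q
        exact Fin.ext (by omega)
      subst hj0
      simp only [c, LinearMap.coe_mk, AddHom.coe_mk, dif_neg h]
      have : (-(x 0 : A)) - (0 : A) = -(x 0 : A) := by abel
      rw [this]
      exact neg_mem (x 0).2
  -- the descended map
  let φ : cechH1 R A q Asub →ₗ[R] diagQuot R A q Asub := Submodule.liftQ p Ψ hker
  -- injectivity: ker Ψ ≤ p
  have hker2 : LinearMap.ker Ψ ≤ p := by
    rintro ⟨y, hy⟩ hmem
    simp only [LinearMap.mem_ker, Ψ, LinearMap.comp_apply, Submodule.coe_subtype] at hmem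
    rw [show P (M (c y)) = 0 ↔ M (c y) ∈ LinearMap.range D from
      Submodule.Quotient.mk_eq_zero _] at hmem
    obtain ⟨a, ha⟩ := hmem
    simp only [hp, Submodule.mem_comap, LinearMap.mem_range, Submodule.coe_subtype]
    have hja : ∀ j, c y j - a ∈ Asub j := by
      intro j
      have := congrFun ha j
      simp only [D, M, LinearMap.pi_apply, LinearMap.comp_apply, LinearMap.proj_apply] at this
      rw [Submodule.mkQ_apply, Submodule.mkQ_apply, Submodule.Quotient.eq] at this
      simpa using neg_mem this
    refine ⟨fun j => ⟨c y j - a, hja j⟩, ?_⟩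
    funext pr
    simp only [cechD0, LinearMap.coe_mk, AddHom.coe_mk]
    rw [cocycle y hy pr]
    abel
  -- surjectivity of Ψ
  have hsurj : Function.Surjective Ψ := by
    intro d
    obtain ⟨e, he⟩ := Submodule.mkQ_surjective (LinearMap.range D) d
    choose f hf using fun j => Submodule.mkQ_surjective (Asub j) (e j)
    set y : PairIdx q → A := fun pr => f pr.1.2 - f pr.1.1 with hydef
    have hy : y ∈ LinearMap.ker (cechD1 R A q) := by
      simp only [LinearMap.mem_ker]
      funext t
      simp only [cechD1, LinearMap.coe_mk, AddHom.coe_mk, hydef, Pi.zero_apply]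
      abel
    refine ⟨⟨y, hy⟩, ?_⟩
    simp only [Ψ, LinearMap.comp_apply, Submodule.coe_subtype]
    have hMc : M (c y) = M (fun j => f j - f 0) := by
      funext j
      simp only [M, LinearMap.pi_apply, LinearMap.comp_apply, LinearMap.proj_apply]
      congr 1
      by_cases h : (0 : Fin q) < j
      · simp only [c, LinearMap.coe_mk, AddHom.coe_mk, dif_pos h, hydef]
      · have hj0 : j = 0 := by
          have hv1 : ¬ (0 : Fin q).val < j.val := fun hc => h (Fin.lt_def.mpr hc)
          have hv2 : (0 : Fin q).val = 0 := Fin.val_zero q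
          exact Fin.ext (by omega)
        subst hj0
        simp only [c, LinearMap.coe_mk, AddHom.coe_mk, dif_neg h, sub_self]
    rw [hMc]
    have hMf : M (fun j => f j - f 0) = M (fun j => f j) - D (f 0) := by
      funext j
      simp only [M, D, LinearMap.pi_apply, LinearMap.comp_apply, LinearMap.proj_apply,
        Pi.sub_apply, Submodule.mkQ_apply]
      rw [← Submodule.Quotient.mk_sub]
    rw [hMf, map_sub]
    have hPD : P (D (f 0)) = 0 := by
      rw [show P (D (f 0)) = 0 ↔ D (f 0) ∈ LinearMap.range D from
        Submodule.Quotient.mk_eq_zero _]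
      exact ⟨f 0, rfl⟩
    rw [hPD, sub_zero]
    have hMe : M (fun j => f j) = e := by
      funext j
      simp only [M, LinearMap.pi_apply, LinearMap.comp_apply, LinearMap.proj_apply]
      exact hf j
    rw [hMe]
    exact he
  refine ⟨LinearEquiv.ofBijective φ ⟨?_, ?_⟩⟩
  · rw [← LinearMap.ker_eq_bot]
    exact Submodule.ker_liftQ_eq_bot p Ψ hker hker2
  · intro d
    obtain ⟨s, hs⟩ := hsurj d
    exact ⟨Submodule.Quotient.mk s, hs⟩
end

section
/- Let N be a rank-2 lattice (free abelian group Z^2) with dual lattice M. Let a1 != a2 be elements of N and chi in M with chi(a1) = chi(a2) = 1. Then a1 and a2 span N tensor Q as a Q-vector space. Moreover, if chi1 is the primitive lattice point on the ray {chi' in M : chi'(a1) > 0, chi'(a2) = 0} and chi2 is the primitive lattice point on the ray {chi' in M : chi'(a1) = 0, chi'(a2) > 0}, then chi1(a1) = chi2(a2) = L, where L is the lattice length of a1 - a2 (the number of lattice points on the segment from a1 to a2 counting exactly one endpoint, equivalently the largest integer d such that (a1-a2)/d lies in N). -/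
open Matrix

/-- A vector of the lattice `N = ℤ²` (or of the dual lattice `M`) is primitive if the gcd
of its coordinates is `1`. -/
def IsPrimitive2 (v : Fin 2 → ℤ) : Prop := Int.gcd (v 0) (v 1) = 1

/-- The lattice length of `v ∈ ℤ²`: the largest integer `d` such that `v/d` is a lattice
vector, i.e. the gcd of the coordinates of `v` (for `v ≠ 0`). -/
def latticeLength2 (v : Fin 2 → ℤ) : ℕ := Int.gcd (v 0) (v 1)

lemma ker_lemma (p q x y : ℤ) (h : Int.gcd p q = 1) (h2 : p*x + q*y = 0) :
    ∃ k, x = -q*k ∧ y = p*k := by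
  have hc : IsCoprime p q := Int.isCoprime_iff_gcd_eq_one.mpr h
  have hd : p ∣ q * y := ⟨-x, by linarith⟩
  obtain ⟨k, hk⟩ := hc.dvd_of_dvd_mul_left hd
  by_cases hp : p = 0
  · subst hp
    have hq : q = 1 ∨ q = -1 := by
      have : q.natAbs = 1 := by simpa [Int.gcd] using h
      omega
    have hy : y = 0 := by rcases hq with h|h <;> omega
    exact ⟨-q*x, by rcases hq with h|h <;> subst h <;> simp [hy]⟩
  · refine ⟨k, ?_, hk⟩
    have h3 : p * x = p * (-q * k) := by rw [hk] at h2; linarith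
    exact mul_left_cancel₀ hp h3


/-- first part of Lemma `smalllaticepoints`: let `N = ℤ²` with dual `M`,
`a1 ≠ a2` in `N`, and `χ ∈ M` with `χ(a1) = χ(a2) = 1`.  Then `a1`, `a2` span `N ⊗ ℚ`.
Moreover, if `χ1` is the primitive lattice point on the ray
`{χ' : χ'(a1) > 0, χ'(a2) = 0}` and `χ2` the primitive lattice point on the ray
`{χ' : χ'(a1) = 0, χ'(a2) > 0}`, then `χ1(a1) = χ2(a2) = L` where `L` is the lattice
length of `a1 - a2`. -/
theorem stmt8 (a1 a2 chi chi1 chi2 : Fin 2 → ℤ)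
    (hne : a1 ≠ a2) (h1 : chi ⬝ᵥ a1 = 1) (h2 : chi ⬝ᵥ a2 = 1)
    (hchi1a : 0 < chi1 ⬝ᵥ a1) (hchi1b : chi1 ⬝ᵥ a2 = 0) (hchi1p : IsPrimitive2 chi1)
    (hchi2a : chi2 ⬝ᵥ a1 = 0) (hchi2b : 0 < chi2 ⬝ᵥ a2) (hchi2p : IsPrimitive2 chi2) :
    Submodule.span ℚ {(fun i => (a1 i : ℚ)), (fun i => (a2 i : ℚ))} =
        (⊤ : Submodule ℚ (Fin 2 → ℚ)) ∧
    chi1 ⬝ᵥ a1 = (latticeLength2 (a1 - a2) : ℤ) ∧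
    chi2 ⬝ᵥ a2 = (latticeLength2 (a1 - a2) : ℤ) := by
  simp only [dotProduct, Fin.sum_univ_two] at h1 h2 hchi1a hchi1b hchi2a hchi2b
  -- a1 - a2 lies in the kernel of chi
  have hchip : Int.gcd (chi 0) (chi 1) = 1 := by
    have : IsCoprime (chi 0) (chi 1) := ⟨a1 0, a1 1, by linarith⟩
    exact Int.isCoprime_iff_gcd_eq_one.mp this
  obtain ⟨s, hs1, hs2⟩ := ker_lemma (chi 0) (chi 1) (a1 0 - a2 0) (a1 1 - a2 1) hchip
    (by ring_nf; linarith)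
  obtain ⟨t, ht1, ht2⟩ := ker_lemma (chi1 0) (chi1 1) (a2 0) (a2 1) hchi1p (by linarith)
  obtain ⟨u, hu1, hu2⟩ := ker_lemma (chi2 0) (chi2 1) (a1 0) (a1 1) hchi2p (by linarith)
  -- invertibility relations
  have hT : t * (chi 1 * chi1 0 - chi 0 * chi1 1) = 1 := by
    rw [ht1, ht2] at h2; linarith [h2]
  have hU : u * (chi 1 * chi2 0 - chi 0 * chi2 1) = 1 := by
    rw [hu1, hu2] at h1; linarith [h1]
  have hT' : (chi 1 * chi1 0 - chi 0 * chi1 1) = 1 ∨ (chi 1 * chi1 0 - chi 0 * chi1 1) = -1 := by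
    rcases Int.mul_eq_one_iff_eq_one_or_neg_one.mp hT with ⟨_, h⟩ | ⟨_, h⟩ <;> [left; right] <;>
      exact h
  have hU' : (chi 1 * chi2 0 - chi 0 * chi2 1) = 1 ∨ (chi 1 * chi2 0 - chi 0 * chi2 1) = -1 := by
    rcases Int.mul_eq_one_iff_eq_one_or_neg_one.mp hU with ⟨_, h⟩ | ⟨_, h⟩ <;> [left; right] <;>
      exact h
  -- the lattice length is |s|
  have hL : latticeLength2 (a1 - a2) = s.natAbs := by
    show Int.gcd ((a1 - a2) 0) ((a1 - a2) 1) = s.natAbs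
    simp only [Pi.sub_apply]
    rw [hs1, hs2]
    have : -chi 1 * s = -chi 1 * s := rfl
    rw [Int.gcd_mul_right]
    have : Int.gcd (-chi 1) (chi 0) = 1 := by
      rw [Int.neg_gcd, Int.gcd_comm]; exact hchip
    rw [this, one_mul]
  have hsne : s ≠ 0 := by
    intro h
    apply hne
    subst h
    simp only [mul_zero] at hs1 hs2
    funext i
    fin_cases i
    · show a1 0 = a2 0; omega
    · show a1 1 = a2 1; omega
  -- chi1 ⬝ a1 = -s * T
  have hC1 : chi1 0 * a1 0 + chi1 1 * a1 1 = -s * (chi 1 * chi1 0 - chi 0 * chi1 1) := by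
    have e0 : a1 0 = a2 0 + (-chi 1 * s) := by linarith
    have e1 : a1 1 = a2 1 + (chi 0 * s) := by linarith
    rw [e0, e1]; ring_nf; linarith [hchi1b]
  have hC2 : chi2 0 * a2 0 + chi2 1 * a2 1 = s * (chi 1 * chi2 0 - chi 0 * chi2 1) := by
    have e0 : a2 0 = a1 0 - (-chi 1 * s) := by linarith
    have e1 : a2 1 = a1 1 - (chi 0 * s) := by linarith
    rw [e0, e1]; ring_nf; linarith [hchi2a]
  refine ⟨?_, ?_, ?_⟩
  · -- span
    have hdet : a1 0 * a2 1 - a1 1 * a2 0 = -s := by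
      have e0 : a1 0 = a2 0 + (-chi 1 * s) := by linarith
      have e1 : a1 1 = a2 1 + (chi 0 * s) := by linarith
      rw [e0, e1, ht1, ht2]; linear_combination (-s) * hT
    have hDz : ((a1 0 : ℚ) * a2 1 - a1 1 * a2 0) ≠ 0 := by
      have : ((a1 0 * a2 1 - a1 1 * a2 0 : ℤ) : ℚ) ≠ 0 := by
        rw [hdet]; simpa using hsne
      push_cast at this
      convert this using 1
    rw [eq_top_iff]
    rintro x -
    have hx : x = ((x 0 * (a2 1 : ℚ) - x 1 * a2 0) / ((a1 0 : ℚ) * a2 1 - a1 1 * a2 0)) •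
          (fun i => (a1 i : ℚ)) +
        (((a1 0 : ℚ) * x 1 - (a1 1 : ℚ) * x 0) / ((a1 0 : ℚ) * a2 1 - a1 1 * a2 0)) •
          (fun i => (a2 i : ℚ)) := by
      funext i
      fin_cases i <;>
        simp only [Fin.zero_eta, Fin.mk_one, Pi.add_apply, Pi.smul_apply, smul_eq_mul] <;>
        rw [div_mul_eq_mul_div, div_mul_eq_mul_div, ← add_div, eq_div_iff hDz] <;> ring
    rw [hx]
    exact Submodule.add_mem _
      (Submodule.smul_mem _ _ (Submodule.subset_span (Set.mem_insert _ _)))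
      (Submodule.smul_mem _ _ (Submodule.subset_span (Set.mem_insert_of_mem _ rfl)))
  · simp only [dotProduct, Fin.sum_univ_two, hL]
    rcases hT' with h | h <;> rw [h] at hC1 <;> omega
  · simp only [dotProduct, Fin.sum_univ_two, hL]
    rcases hU' with h | h <;> rw [h] at hC2 <;> omega
end
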